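/- Let θ be a categorical distribution on a finite nonempty set X, let n ≥ 1, ε > 0, and let α satisfy α < 0 or α ≥ 1. Then: (i) P_θ(A^n_{θ,α,ε}) ≥ (1 − V(T(θ,α)||θ)/(n·ε²))·exp(−n·D(T(θ,α)||θ) − |1−α|·n·ε); (ii) P_θ(A^n_{θ,α,ε}) ≤ P_θ(D^n_{θ,α,ε}) ≤ exp(−n·D(T(θ,α)||θ) + |1−α|·n·ε); and (iii) P_θ(E^n_{θ,α,ε}) ≥ 1 − exp(−n·D(T(θ,α)||θ) + |1−α|·n·ε). -/

import Mathlib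

open Real BigOperators
open scoped Classical

variable {X : Type*}

/-- A categorical distribution on a finite set: positive everywhere and sums to 1. -/
def IsCatDist [Fintype X] (θ : X → ℝ) : Prop :=
  (∀ x, 0 < θ x) ∧ ∑ x, θ x = 1

/-- The tilt of order `α` of a categorical distribution. -/
noncomputable def tilt [Fintype X] (θ : X → ℝ) (α : ℝ) : X → ℝ :=
  fun x => θ x ^ α / ∑ y, θ y ^ α

/-- Shannon entropy (natural log). -/
noncomputable def shannonEntropy [Fintype X] (ρ : X → ℝ) : ℝ :=
  ∑ x, ρ x * Real.log (1 / ρ x)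

/-- Cross entropy `H(ρ‖θ)`. -/
noncomputable def crossEntropy [Fintype X] (ρ θ : X → ℝ) : ℝ :=
  ∑ x, ρ x * Real.log (1 / θ x)

/-- Relative entropy (KL divergence) `D(ρ‖θ)`. -/
noncomputable def relEntropy [Fintype X] (ρ θ : X → ℝ) : ℝ :=
  ∑ x, ρ x * Real.log (ρ x / θ x)

/-- Rényi entropy of order `α`. -/
noncomputable def renyiEntropy [Fintype X] (θ : X → ℝ) (α : ℝ) : ℝ :=
  (1 / (1 - α)) * Real.log (∑ x, θ x ^ α)

/-- Varentropy. -/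
noncomputable def varentropy [Fintype X] (ρ : X → ℝ) : ℝ :=
  ∑ x, ρ x * (Real.log (1 / ρ x) - shannonEntropy ρ) ^ 2

/-- Cross varentropy. -/
noncomputable def crossVarentropy [Fintype X] (ρ θ : X → ℝ) : ℝ :=
  ∑ x, ρ x * (Real.log (1 / θ x) - crossEntropy ρ θ) ^ 2

/-- Probability of an `n`-string under the i.i.d. extension of `θ`. -/
noncomputable def strProb (θ : X → ℝ) {n : ℕ} (x : Fin n → X) : ℝ := ∏ i, θ (x i)

/-- Probability of a set of `n`-strings. -/
noncomputable def setProb [Fintype X] (θ : X → ℝ) {n : ℕ} (S : Finset (Fin n → X)) : ℝ :=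
  ∑ x ∈ S, strProb θ x

/-- `θ` has a unique maximizer and a unique minimizer. -/
def UniqueExtremizers [Fintype X] (θ : X → ℝ) : Prop :=
  (∃! x : X, ∀ y, θ y ≤ θ x) ∧ (∃! x : X, ∀ y, θ x ≤ θ y)

/-- Tilted weakly typical set of order `α`. -/
noncomputable def typicalSetA [Fintype X] (θ : X → ℝ) (α : ℝ) (n : ℕ) (ε : ℝ) :
    Finset (Fin n → X) :=
  Finset.univ.filter (fun x =>
    Real.exp (-(n : ℝ) * crossEntropy (tilt θ α) θ - n * ε) < strProb θ x ∧
    strProb θ x < Real.exp (-(n : ℝ) * crossEntropy (tilt θ α) θ + n * ε))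

/-- The set `D^n_{θ,α,ε}`. -/
noncomputable def setD [Fintype X] (θ : X → ℝ) (α : ℝ) (n : ℕ) (ε : ℝ) :
    Finset (Fin n → X) :=
  Finset.univ.filter (fun x =>
    strProb (tilt θ α) x > Real.exp (-(n : ℝ) * shannonEntropy (tilt θ α) - n * |α| * ε))

/-- The set `E^n_{θ,α,ε}`. -/
noncomputable def setE [Fintype X] (θ : X → ℝ) (α : ℝ) (n : ℕ) (ε : ℝ) :
    Finset (Fin n → X) :=
  Finset.univ.filter (fun x =>
    strProb (tilt θ α) x < Real.exp (-(n : ℝ) * shannonEntropy (tilt θ α) + n * |α| * ε))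

/-- A guesswork function for `θ` on `n`-strings: a bijection onto `{1,…,|X|^n}`
that orders strings from most likely to least likely. -/
def IsGuesswork [Fintype X] (θ : X → ℝ) {n : ℕ} (G : (Fin n → X) → ℕ) : Prop :=
  Function.Injective G ∧
  (∀ x, G x ∈ Finset.Icc 1 (Fintype.card X ^ n)) ∧
  (∀ m ∈ Finset.Icc 1 (Fintype.card X ^ n), ∃ x, G x = m) ∧
  (∀ x y, strProb θ x > strProb θ y → G x < G y)

section Aux
lemma aux_sum_prod [Fintype X] (n : ℕ) (h : Fin n → X → ℝ) :
    ∑ x : Fin n → X, ∏ i, h i (x i) = ∏ i, ∑ y, h i y := by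
  rw [Finset.prod_univ_sum]
  simp [Fintype.piFinset_univ]

lemma aux_scalar1 (α u c : ℝ) (h : |u| ≤ c) : -(|1-α| * c) ≤ (1-α)*u := by
  have h1 : |(1-α)*u| ≤ |1-α| * c := by
    rw [abs_mul]; exact mul_le_mul_of_nonneg_left h (abs_nonneg _)
  linarith [neg_abs_le ((1-α)*u)]

lemma aux_scalar2 (α u c : ℝ) (hα : α < 0 ∨ 1 ≤ α)
    (h : -(|α| * c) ≤ α * u) : (1-α)*u ≤ |1-α| * c := by
  rcases hα with hα | hα
  · rw [abs_of_neg hα] at h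
    rw [abs_of_pos (by linarith : (0:ℝ) < 1 - α)]
    have hu : u ≤ c := by nlinarith
    nlinarith
  · rw [abs_of_pos (by linarith : (0:ℝ) < α)] at h
    rw [abs_of_nonpos (by linarith : 1 - α ≤ 0)]
    have hu : -c ≤ u := by nlinarith
    nlinarith

lemma aux_scalar3 (α u c : ℝ) (hα : α ≠ 0) (h : |u| < c) : -(|α| * c) < α * u := by
  have h1 : |α * u| < |α| * c := by
    rw [abs_mul]; exact mul_lt_mul_of_pos_left h (abs_pos.mpr hα)
  linarith [neg_abs_le (α*u)]

variable [Fintype X] [Nonempty X] {θ : X → ℝ}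

lemma aux_Zpos (hθ : IsCatDist θ) (α : ℝ) : 0 < ∑ y, θ y ^ α :=
  Finset.sum_pos (fun y _ => Real.rpow_pos_of_pos (hθ.1 y) α) Finset.univ_nonempty

lemma aux_tilt_pos (hθ : IsCatDist θ) (α : ℝ) (x : X) : 0 < tilt θ α x :=
  div_pos (Real.rpow_pos_of_pos (hθ.1 x) α) (aux_Zpos hθ α)

lemma aux_tilt_sum (hθ : IsCatDist θ) (α : ℝ) : ∑ x, tilt θ α x = 1 := by
  unfold tilt
  rw [← Finset.sum_div, div_self (aux_Zpos hθ α).ne']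

lemma aux_log_tilt (hθ : IsCatDist θ) (α : ℝ) (x : X) :
    Real.log (tilt θ α x) = α * Real.log (θ x) - Real.log (∑ y, θ y ^ α) := by
  unfold tilt
  rw [Real.log_div (Real.rpow_pos_of_pos (hθ.1 x) α).ne' (aux_Zpos hθ α).ne',
    Real.log_rpow (hθ.1 x)]

lemma aux_shannon_tilt (hθ : IsCatDist θ) (α : ℝ) :
    shannonEntropy (tilt θ α)
      = α * crossEntropy (tilt θ α) θ + Real.log (∑ y, θ y ^ α) := by
  have key : ∀ x : X, Real.log (1 / tilt θ α x)
      = α * Real.log (1 / θ x) + Real.log (∑ y, θ y ^ α) := by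
    intro x
    rw [one_div, Real.log_inv, one_div, Real.log_inv, aux_log_tilt hθ α x]
    ring
  unfold shannonEntropy crossEntropy
  calc ∑ x, tilt θ α x * Real.log (1 / tilt θ α x)
      = ∑ x, (α * (tilt θ α x * Real.log (1 / θ x))
          + tilt θ α x * Real.log (∑ y, θ y ^ α)) := by
        refine Finset.sum_congr rfl fun x _ => ?_
        rw [key x]; ring
    _ = α * ∑ x, tilt θ α x * Real.log (1 / θ x)
          + (∑ x, tilt θ α x) * Real.log (∑ y, θ y ^ α) := by
        rw [Finset.sum_add_distrib, Finset.mul_sum, Finset.sum_mul]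
    _ = _ := by rw [aux_tilt_sum hθ α, one_mul]

lemma aux_rel_tilt (hθ : IsCatDist θ) (α : ℝ) :
    relEntropy (tilt θ α) θ
      = crossEntropy (tilt θ α) θ - shannonEntropy (tilt θ α) := by
  unfold relEntropy crossEntropy shannonEntropy
  rw [← Finset.sum_sub_distrib]
  refine Finset.sum_congr rfl fun x _ => ?_
  rw [Real.log_div (aux_tilt_pos hθ α x).ne' (hθ.1 x).ne',
    one_div, Real.log_inv, one_div, Real.log_inv]
  ring
end Aux

section Aux2
variable [Fintype X]

lemma aux_strProb_pos {θ : X → ℝ} (hθpos : ∀ x, 0 < θ x) {n : ℕ} (x : Fin n → X) :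
    0 < strProb θ x :=
  Finset.prod_pos fun i _ => hθpos (x i)

lemma aux_log_strProb {θ : X → ℝ} (hθpos : ∀ x, 0 < θ x) {n : ℕ} (x : Fin n → X) :
    Real.log (strProb θ x) = ∑ i, Real.log (θ (x i)) :=
  Real.log_prod fun i _ => (hθpos (x i)).ne'

lemma aux_strProb_sum (ρ : X → ℝ) (hρ1 : ∑ x, ρ x = 1) (n : ℕ) :
    ∑ x : Fin n → X, strProb ρ x = 1 := by
  have h := aux_sum_prod (X := X) n (fun _ y => ρ y)
  simpa [strProb, hρ1] using h

lemma aux_variance (ρ : X → ℝ) (hρ1 : ∑ x, ρ x = 1) (g : X → ℝ)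
    (hg0 : ∑ y, ρ y * g y = 0) (n : ℕ) :
    ∑ x : Fin n → X, strProb ρ x * (∑ i, g (x i))^2
      = n * ∑ y, ρ y * g y ^ 2 := by
  have h1 : ∀ x : Fin n → X, strProb ρ x * (∑ i, g (x i))^2
      = ∑ i, ∑ j, (∏ k, ρ (x k)) * (g (x i) * g (x j)) := by
    intro x
    rw [sq, Finset.sum_mul_sum]
    simp only [strProb, Finset.mul_sum]
  have hij : ∀ i j : Fin n,
      ∑ x : Fin n → X, (∏ k, ρ (x k)) * (g (x i) * g (x j))
        = if i = j then ∑ y, ρ y * g y ^ 2 else 0 := by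
    intro i j
    by_cases hij : i = j
    · subst hij
      rw [if_pos rfl]
      have e1 : ∀ x : Fin n → X, (∏ k, ρ (x k)) * (g (x i) * g (x i))
          = ∏ k, (ρ (x k) * (if k = i then g (x k) ^ 2 else 1)) := by
        intro x
        rw [Finset.prod_mul_distrib, Finset.prod_ite_eq' Finset.univ i (fun k => g (x k) ^ 2)]
        simp [sq]
      rw [Finset.sum_congr rfl fun x _ => e1 x,
        aux_sum_prod n (fun k y => ρ y * if k = i then g y ^ 2 else 1)]
      have e2 : ∀ k : Fin n, (∑ y, ρ y * (if k = i then g y ^ 2 else 1))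
          = if k = i then ∑ y, ρ y * g y ^ 2 else 1 := by
        intro k
        by_cases h : k = i <;> simp [h, hρ1]
      rw [Finset.prod_congr rfl fun k _ => e2 k,
        Finset.prod_ite_eq' Finset.univ i (fun _ => ∑ y, ρ y * g y ^ 2)]
      simp
    · simp only [if_neg hij]
      have e1 : ∀ x : Fin n → X, (∏ k, ρ (x k)) * (g (x i) * g (x j))
          = ∏ k, (ρ (x k) * ((if k = i then g (x k) else 1) * (if k = j then g (x k) else 1))) := by
        intro x
        rw [Finset.prod_mul_distrib, Finset.prod_mul_distrib,
          Finset.prod_ite_eq' Finset.univ i (fun k => g (x k)),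
          Finset.prod_ite_eq' Finset.univ j (fun k => g (x k))]
        simp [mul_assoc]
      rw [Finset.sum_congr rfl fun x _ => e1 x,
        aux_sum_prod n (fun k y => ρ y * ((if k = i then g y else 1) * (if k = j then g y else 1)))]
      apply Finset.prod_eq_zero (Finset.mem_univ i)
      simpa [hij] using hg0
  calc ∑ x : Fin n → X, strProb ρ x * (∑ i, g (x i))^2
      = ∑ x : Fin n → X, ∑ i, ∑ j, (∏ k, ρ (x k)) * (g (x i) * g (x j)) :=
        Finset.sum_congr rfl fun x _ => h1 x
    _ = ∑ i, ∑ x : Fin n → X, ∑ j, (∏ k, ρ (x k)) * (g (x i) * g (x j)) := Finset.sum_comm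
    _ = ∑ i : Fin n, ∑ j : Fin n, ∑ x : Fin n → X, (∏ k, ρ (x k)) * (g (x i) * g (x j)) := by
        exact Finset.sum_congr rfl fun i _ => Finset.sum_comm
    _ = ∑ i : Fin n, ∑ j : Fin n, if i = j then ∑ y, ρ y * g y ^ 2 else 0 := by
        exact Finset.sum_congr rfl fun i _ => Finset.sum_congr rfl fun j _ => hij i j
    _ = n * ∑ y, ρ y * g y ^ 2 := by
        simp [Finset.sum_ite_eq, Finset.mul_sum]
end Aux2

theorem tilted_typical_set_prob_bounds [Fintype X] [Nonempty X] (θ : X → ℝ)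
    (hθ : IsCatDist θ) (n : ℕ) (hn : 1 ≤ n) (ε : ℝ) (hε : 0 < ε)
    (α : ℝ) (hα : α < 0 ∨ 1 ≤ α) :
    (1 - crossVarentropy (tilt θ α) θ / (n * ε ^ 2)) *
        Real.exp (-(n : ℝ) * relEntropy (tilt θ α) θ - |1 - α| * n * ε) ≤
      setProb θ (typicalSetA θ α n ε) ∧
    setProb θ (typicalSetA θ α n ε) ≤ setProb θ (setD θ α n ε) ∧
    setProb θ (setD θ α n ε) ≤
      Real.exp (-(n : ℝ) * relEntropy (tilt θ α) θ + |1 - α| * n * ε) ∧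
    1 - Real.exp (-(n : ℝ) * relEntropy (tilt θ α) θ + |1 - α| * n * ε) ≤
      setProb θ (setE θ α n ε) := by
  obtain ⟨hθpos, hθsum⟩ := hθ
  have hθ' : IsCatDist θ := ⟨hθpos, hθsum⟩
  have hρpos : ∀ x, 0 < tilt θ α x := aux_tilt_pos hθ' α
  have hρsum : ∑ x, tilt θ α x = 1 := aux_tilt_sum hθ' α
  have hαne : α ≠ 0 := by rcases hα with h | h <;> intro h0 <;> rw [h0] at h <;> linarith
  have hn0 : (0:ℝ) < (n:ℝ) := by exact_mod_cast Nat.lt_of_lt_of_le Nat.zero_lt_one hn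
  have hnε : (0:ℝ) < (n:ℝ) * ε := mul_pos hn0 hε
  have hθnpos : ∀ x : Fin n → X, 0 < strProb θ x := fun x => aux_strProb_pos hθpos x
  have hρnpos : ∀ x : Fin n → X, 0 < strProb (tilt θ α) x :=
    fun x => aux_strProb_pos hρpos x
  -- log of string probabilities
  have hlogρn : ∀ x : Fin n → X,
      Real.log (strProb (tilt θ α) x)
        = α * Real.log (strProb θ x) - n * Real.log (∑ y, θ y ^ α) := by
    intro x
    rw [aux_log_strProb hρpos x, aux_log_strProb hθpos x]
    calc ∑ i, Real.log (tilt θ α (x i))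
        = ∑ i, (α * Real.log (θ (x i)) - Real.log (∑ y, θ y ^ α)) :=
          Finset.sum_congr rfl fun i _ => aux_log_tilt hθ' α (x i)
      _ = α * ∑ i, Real.log (θ (x i)) - n * Real.log (∑ y, θ y ^ α) := by
          rw [Finset.sum_sub_distrib, ← Finset.mul_sum, Finset.sum_const]
          simp [mul_comm]
  -- membership characterizations via u x := log (strProb θ x) + n * Hc
  have hmemA : ∀ x : Fin n → X, x ∈ typicalSetA θ α n ε ↔
      |Real.log (strProb θ x) + n * crossEntropy (tilt θ α) θ| < n * ε := by
    intro x
    simp only [typicalSetA, Finset.mem_filter, Finset.mem_univ, true_and]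
    rw [← Real.lt_log_iff_exp_lt (hθnpos x), ← Real.log_lt_iff_lt_exp (hθnpos x), abs_lt]
    constructor <;> rintro ⟨h1, h2⟩ <;> constructor <;> linarith
  have hmemD : ∀ x : Fin n → X, x ∈ setD θ α n ε ↔
      -(|α| * ((n:ℝ) * ε)) < α * (Real.log (strProb θ x) + n * crossEntropy (tilt θ α) θ) := by
    intro x
    simp only [setD, Finset.mem_filter, Finset.mem_univ, true_and, gt_iff_lt]
    rw [← Real.lt_log_iff_exp_lt (hρnpos x), hlogρn x, aux_shannon_tilt hθ' α]
    constructor <;> intro h <;> nlinarith [h]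
  have hmemE : ∀ x : Fin n → X, x ∈ setE θ α n ε ↔
      α * (Real.log (strProb θ x) + n * crossEntropy (tilt θ α) θ) < |α| * ((n:ℝ) * ε) := by
    intro x
    simp only [setE, Finset.mem_filter, Finset.mem_univ, true_and]
    rw [← Real.log_lt_iff_lt_exp (hρnpos x), hlogρn x, aux_shannon_tilt hθ' α]
    constructor <;> intro h <;> nlinarith [h]
  -- pointwise exponential bounds
  have hub : ∀ x : Fin n → X,
      (1-α) * (Real.log (strProb θ x) + n * crossEntropy (tilt θ α) θ) ≤ |1-α| * ((n:ℝ) * ε) →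
      strProb θ x ≤ strProb (tilt θ α) x *
        Real.exp (-(n : ℝ) * relEntropy (tilt θ α) θ + |1 - α| * n * ε) := by
    intro x h
    rw [← Real.exp_log (hθnpos x), ← Real.exp_log (hρnpos x)]
    rw [← Real.exp_add, Real.exp_le_exp, hlogρn x, aux_rel_tilt hθ' α, aux_shannon_tilt hθ' α]
    nlinarith [h]
  have hlb : ∀ x : Fin n → X,
      -(|1-α| * ((n:ℝ) * ε)) ≤ (1-α) * (Real.log (strProb θ x) + n * crossEntropy (tilt θ α) θ) →
      strProb (tilt θ α) x *
        Real.exp (-(n : ℝ) * relEntropy (tilt θ α) θ - |1 - α| * n * ε) ≤ strProb θ x := by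
    intro x h
    rw [← Real.exp_log (hθnpos x), ← Real.exp_log (hρnpos x)]
    rw [← Real.exp_add, Real.exp_le_exp, hlogρn x, aux_rel_tilt hθ' α, aux_shannon_tilt hθ' α]
    nlinarith [h]
  have hρsum1 : ∑ x : Fin n → X, strProb (tilt θ α) x = 1 := aux_strProb_sum _ hρsum n
  have hθsum1 : ∑ x : Fin n → X, strProb θ x = 1 := aux_strProb_sum _ hθsum n
  -- Part (ii) first: A ⊆ D
  have hAD : typicalSetA θ α n ε ⊆ setD θ α n ε := by
    intro x hx
    rw [hmemD]
    exact aux_scalar3 α _ _ hαne ((hmemA x).1 hx)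
  have part2a : setProb θ (typicalSetA θ α n ε) ≤ setProb θ (setD θ α n ε) :=
    Finset.sum_le_sum_of_subset_of_nonneg hAD (fun x _ _ => (hθnpos x).le)
  -- generic upper bound for sets whose members satisfy the D-type inequality
  have hgen : ∀ S : Finset (Fin n → X),
      (∀ x ∈ S, -(|α| * ((n:ℝ) * ε)) ≤
        α * (Real.log (strProb θ x) + n * crossEntropy (tilt θ α) θ)) →
      setProb θ S ≤ Real.exp (-(n : ℝ) * relEntropy (tilt θ α) θ + |1 - α| * n * ε) := by
    intro S hS
    calc setProb θ S
        ≤ ∑ x ∈ S, strProb (tilt θ α) x *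
            Real.exp (-(n : ℝ) * relEntropy (tilt θ α) θ + |1 - α| * n * ε) :=
          Finset.sum_le_sum fun x hx => hub x (aux_scalar2 α _ _ hα (hS x hx))
      _ = (∑ x ∈ S, strProb (tilt θ α) x) *
            Real.exp (-(n : ℝ) * relEntropy (tilt θ α) θ + |1 - α| * n * ε) :=
          (Finset.sum_mul _ _ _).symm
      _ ≤ 1 * Real.exp (-(n : ℝ) * relEntropy (tilt θ α) θ + |1 - α| * n * ε) := by
          refine mul_le_mul_of_nonneg_right ?_ (Real.exp_nonneg _)
          rw [← hρsum1]
          exact Finset.sum_le_sum_of_subset_of_nonneg (Finset.subset_univ S)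
            (fun x _ _ => (hρnpos x).le)
      _ = _ := one_mul _
  have part2b : setProb θ (setD θ α n ε) ≤
      Real.exp (-(n : ℝ) * relEntropy (tilt θ α) θ + |1 - α| * n * ε) :=
    hgen _ fun x hx => ((hmemD x).1 hx).le
  -- Part (iii)
  have part3 : 1 - Real.exp (-(n : ℝ) * relEntropy (tilt θ α) θ + |1 - α| * n * ε) ≤
      setProb θ (setE θ α n ε) := by
    have hsplit : ∑ x ∈ Finset.univ \ setE θ α n ε, strProb θ x
        + setProb θ (setE θ α n ε) = 1 := by
      rw [setProb, Finset.sum_sdiff (Finset.subset_univ _), hθsum1]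
    have hcomp : setProb θ (Finset.univ \ setE θ α n ε) ≤
        Real.exp (-(n : ℝ) * relEntropy (tilt θ α) θ + |1 - α| * n * ε) := by
      refine hgen _ fun x hx => ?_
      rw [Finset.mem_sdiff] at hx
      have h := hx.2
      rw [hmemE, not_lt] at h
      have : (0:ℝ) ≤ |α| * ((n:ℝ) * ε) := by positivity
      linarith
    rw [setProb] at hcomp
    linarith
  -- Part (i): Chebyshev
  have hg0 : ∑ y, tilt θ α y * (Real.log (1 / θ y) - crossEntropy (tilt θ α) θ) = 0 := by
    simp only [mul_sub, Finset.sum_sub_distrib, ← Finset.sum_mul, hρsum, one_mul]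
    rw [crossEntropy]
    ring
  have hvar := aux_variance (tilt θ α) hρsum
    (fun y => Real.log (1 / θ y) - crossEntropy (tilt θ α) θ) hg0 n
  have hgsum : ∀ x : Fin n → X,
      ∑ i, (Real.log (1 / θ (x i)) - crossEntropy (tilt θ α) θ)
        = -(Real.log (strProb θ x) + n * crossEntropy (tilt θ α) θ) := by
    intro x
    rw [Finset.sum_sub_distrib, Finset.sum_const, aux_log_strProb hθpos x]
    have : ∑ i, Real.log (1 / θ (x i)) = -∑ i, Real.log (θ (x i)) := by
      simp [one_div, Real.log_inv]
    rw [this]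
    simp [nsmul_eq_mul]
    ring
  have hvar' : ∑ x : Fin n → X, strProb (tilt θ α) x *
      (Real.log (strProb θ x) + n * crossEntropy (tilt θ α) θ)^2
        = n * crossVarentropy (tilt θ α) θ := by
    have e : ∀ x : Fin n → X, strProb (tilt θ α) x *
        (Real.log (strProb θ x) + n * crossEntropy (tilt θ α) θ)^2
        = strProb (tilt θ α) x *
          (∑ i, (Real.log (1 / θ (x i)) - crossEntropy (tilt θ α) θ))^2 := by
      intro x; rw [hgsum x]; ring
    have hcv : ((n:ℝ) * ∑ y, tilt θ α y *
        (Real.log (1 / θ y) - crossEntropy (tilt θ α) θ)^2)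
        = (n:ℝ) * crossVarentropy (tilt θ α) θ := by rw [crossVarentropy]
    exact (Finset.sum_congr rfl fun x _ => e x).trans (hvar.trans hcv)
  have hcheb : ∑ x ∈ Finset.univ \ typicalSetA θ α n ε, strProb (tilt θ α) x
      ≤ crossVarentropy (tilt θ α) θ / ((n:ℝ) * ε ^ 2) := by
    have key : ∀ x ∈ Finset.univ \ typicalSetA θ α n ε, strProb (tilt θ α) x ≤
        strProb (tilt θ α) x *
          (Real.log (strProb θ x) + n * crossEntropy (tilt θ α) θ)^2 / ((n:ℝ)*ε)^2 := by
      intro x hx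
      rw [Finset.mem_sdiff] at hx
      have h := hx.2
      rw [hmemA, not_lt] at h
      have h2 : ((n:ℝ)*ε)^2 ≤ (Real.log (strProb θ x) + n * crossEntropy (tilt θ α) θ)^2 := by
        rw [← sq_abs (Real.log (strProb θ x) + n * crossEntropy (tilt θ α) θ)]
        exact pow_le_pow_left₀ hnε.le h 2
      rw [le_div_iff₀ (by positivity)]
      calc strProb (tilt θ α) x * ((n:ℝ)*ε)^2
          ≤ strProb (tilt θ α) x *
            (Real.log (strProb θ x) + n * crossEntropy (tilt θ α) θ)^2 :=
            mul_le_mul_of_nonneg_left h2 (hρnpos x).le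
        _ = _ := by ring
    calc ∑ x ∈ Finset.univ \ typicalSetA θ α n ε, strProb (tilt θ α) x
        ≤ ∑ x ∈ Finset.univ \ typicalSetA θ α n ε, strProb (tilt θ α) x *
            (Real.log (strProb θ x) + n * crossEntropy (tilt θ α) θ)^2 / ((n:ℝ)*ε)^2 :=
          Finset.sum_le_sum key
      _ ≤ ∑ x : Fin n → X, strProb (tilt θ α) x *
            (Real.log (strProb θ x) + n * crossEntropy (tilt θ α) θ)^2 / ((n:ℝ)*ε)^2 := by
          refine Finset.sum_le_sum_of_subset_of_nonneg (Finset.subset_univ _)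
            (fun x _ _ => ?_)
          exact div_nonneg (mul_nonneg (hρnpos x).le (sq_nonneg _)) (sq_nonneg _)
      _ = ((n:ℝ) * crossVarentropy (tilt θ α) θ) / ((n:ℝ)*ε)^2 := by
          rw [← Finset.sum_div, hvar']
      _ = crossVarentropy (tilt θ α) θ / ((n:ℝ) * ε ^ 2) := by
          field_simp
  have hA1 : 1 - crossVarentropy (tilt θ α) θ / ((n:ℝ) * ε ^ 2)
      ≤ ∑ x ∈ typicalSetA θ α n ε, strProb (tilt θ α) x := by
    have hsplit : ∑ x ∈ Finset.univ \ typicalSetA θ α n ε, strProb (tilt θ α) x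
        + ∑ x ∈ typicalSetA θ α n ε, strProb (tilt θ α) x = 1 := by
      rw [Finset.sum_sdiff (Finset.subset_univ _), hρsum1]
    linarith
  have part1 : (1 - crossVarentropy (tilt θ α) θ / (n * ε ^ 2)) *
      Real.exp (-(n : ℝ) * relEntropy (tilt θ α) θ - |1 - α| * n * ε) ≤
      setProb θ (typicalSetA θ α n ε) := by
    calc (1 - crossVarentropy (tilt θ α) θ / (n * ε ^ 2)) *
        Real.exp (-(n : ℝ) * relEntropy (tilt θ α) θ - |1 - α| * n * ε)
        ≤ (∑ x ∈ typicalSetA θ α n ε, strProb (tilt θ α) x) *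
          Real.exp (-(n : ℝ) * relEntropy (tilt θ α) θ - |1 - α| * n * ε) :=
          mul_le_mul_of_nonneg_right hA1 (Real.exp_nonneg _)
      _ = ∑ x ∈ typicalSetA θ α n ε, strProb (tilt θ α) x *
          Real.exp (-(n : ℝ) * relEntropy (tilt θ α) θ - |1 - α| * n * ε) :=
          Finset.sum_mul _ _ _
      _ ≤ setProb θ (typicalSetA θ α n ε) :=
          Finset.sum_le_sum fun x hx => hlb x (aux_scalar1 α _ _ ((hmemA x).1 hx).le)
  exact ⟨part1, part2a, part2b, part3⟩
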